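/- Let σ be a finite set of uncertain events with timestamps tmin(e) ≤ tmax(e), let E = {(e, e') ∈ σ × σ : tmax(e) < tmin(e')}, and let R ⊆ E be any edge-minimal subrelation of E whose reflexive-transitive closure (reachability relation) coincides with that of E. Then for all e, e' ∈ σ: (e, e') ∈ R if and only if tmax(e) < tmin(e') and there exists no event e'' ∈ σ with tmax(e) < tmin(e'') ≤ tmax(e'') < tmin(e'). In particular the edge set computed by the behavior-graph construction algorithm, which consists exactly of the pairs satisfying this condition, equals the transitive reduction of (σ, E). -/

import Mathlib

/-- Any edge-minimal subrelation `R` of the precedence relation `E` whose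
reflexive-transitive closure coincides with that of `E` consists exactly of the
pairs `(e, e')` with `tmax e < tmin e'` such that no event `e''` satisfies
`tmax e < tmin e'' ≤ tmax e'' < tmin e'`; i.e. it equals the edge set computed
by the behavior-graph construction algorithm, the transitive reduction. -/
theorem behavior_graph_edges_eq_transitive_reduction
    {V : Type*} [Fintype V]
    (tmin tmax : V → ℝ) (h : ∀ e : V, tmin e ≤ tmax e)
    (E R : Finset (V × V))
    (hE : ∀ p : V × V, p ∈ E ↔ tmax p.1 < tmin p.2)
    (hRE : R ⊆ E)
    (hclos : ∀ a b : V,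
      Relation.ReflTransGen (fun x y => (x, y) ∈ R) a b ↔
      Relation.ReflTransGen (fun x y => (x, y) ∈ E) a b)
    (hmin : ∀ R' : Finset (V × V), R' ⊆ E →
      (∀ a b : V,
        Relation.ReflTransGen (fun x y => (x, y) ∈ R') a b ↔
        Relation.ReflTransGen (fun x y => (x, y) ∈ E) a b) →
      R.card ≤ R'.card) :
    ∀ e e' : V, (e, e') ∈ R ↔
      (tmax e < tmin e' ∧
        ¬ ∃ e'' : V, tmax e < tmin e'' ∧ tmin e'' ≤ tmax e'' ∧ tmax e'' < tmin e') := by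
  classical
  set R0 : Finset (V × V) := Finset.univ.filter (fun p =>
    tmax p.1 < tmin p.2 ∧
      ¬ ∃ e'' : V, tmax p.1 < tmin e'' ∧ tmin e'' ≤ tmax e'' ∧ tmax e'' < tmin p.2) with hR0def
  have hmemR0 : ∀ p : V × V, p ∈ R0 ↔
      (tmax p.1 < tmin p.2 ∧
        ¬ ∃ e'' : V, tmax p.1 < tmin e'' ∧ tmin e'' ≤ tmax e'' ∧ tmax e'' < tmin p.2) := by
    intro p; simp [hR0def]
  -- E is transitive
  have hEtrans : ∀ a b c : V, (a, b) ∈ E → (b, c) ∈ E → (a, c) ∈ E := by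
    intro a b c hab hbc
    rw [hE] at *
    exact lt_of_lt_of_le hab (le_trans (h b) (le_of_lt hbc))
  -- characterization of closure of E
  have hEchar : ∀ a b : V,
      Relation.ReflTransGen (fun x y => (x, y) ∈ E) a b → a = b ∨ (a, b) ∈ E := by
    intro a b hab
    induction hab with
    | refl => exact Or.inl rfl
    | tail _ hstep ih =>
      rcases ih with rfl | hE'
      · exact Or.inr hstep
      · exact Or.inr (hEtrans _ _ _ hE' hstep)
  have hR0sub : R0 ⊆ E := by
    intro p hp
    rw [hE]
    exact ((hmemR0 p).1 hp).1
  -- closure of R0 reaches every E-edge: strong induction on the "between" set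
  have key : ∀ n : ℕ, ∀ a b : V,
      (Finset.univ.filter (fun z => tmax a < tmin z ∧ tmax z < tmin b)).card ≤ n →
      (a, b) ∈ E →
      Relation.ReflTransGen (fun x y => (x, y) ∈ R0) a b := by
    intro n
    induction n with
    | zero =>
      intro a b hcard hab
      have hempty : ¬ ∃ e'' : V, tmax a < tmin e'' ∧ tmin e'' ≤ tmax e'' ∧ tmax e'' < tmin b := by
        rintro ⟨z, hz1, _, hz3⟩
        have : z ∈ Finset.univ.filter (fun z => tmax a < tmin z ∧ tmax z < tmin b) := by
          simp [hz1, hz3]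
        have := Finset.card_pos.mpr ⟨z, this⟩
        omega
      exact Relation.ReflTransGen.single ((hmemR0 (a, b)).2 ⟨(hE _).1 hab, hempty⟩)
    | succ n ih =>
      intro a b hcard hab
      by_cases hz : ∃ z : V, tmax a < tmin z ∧ tmax z < tmin b
      · obtain ⟨z, hz1, hz2⟩ := hz
        have hzmem : z ∈ Finset.univ.filter (fun z => tmax a < tmin z ∧ tmax z < tmin b) := by
          simp [hz1, hz2]
        have haz : (a, z) ∈ E := (hE _).2 hz1
        have hzb : (z, b) ∈ E := (hE _).2 hz2
        have hsub1 : Finset.univ.filter (fun w => tmax a < tmin w ∧ tmax w < tmin z) ⊆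
            (Finset.univ.filter (fun w => tmax a < tmin w ∧ tmax w < tmin b)).erase z := by
          intro w hw
          simp only [Finset.mem_filter, Finset.mem_univ, true_and] at hw
          refine Finset.mem_erase.2 ⟨?_, ?_⟩
          · rintro rfl
            exact absurd hw.2 (not_lt.2 (h _))
          · simp only [Finset.mem_filter, Finset.mem_univ, true_and]
            exact ⟨hw.1, lt_of_lt_of_le hw.2 (le_trans (h z) (le_of_lt hz2))⟩
        have hsub2 : Finset.univ.filter (fun w => tmax z < tmin w ∧ tmax w < tmin b) ⊆
            (Finset.univ.filter (fun w => tmax a < tmin w ∧ tmax w < tmin b)).erase z := by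
          intro w hw
          simp only [Finset.mem_filter, Finset.mem_univ, true_and] at hw
          refine Finset.mem_erase.2 ⟨?_, ?_⟩
          · rintro rfl
            exact absurd hw.1 (not_lt.2 (h _))
          · simp only [Finset.mem_filter, Finset.mem_univ, true_and]
            exact ⟨lt_of_le_of_lt (le_trans (le_of_lt hz1) (h z)) hw.1, hw.2⟩
        have herase : ((Finset.univ.filter
            (fun w => tmax a < tmin w ∧ tmax w < tmin b)).erase z).card ≤ n := by
          rw [Finset.card_erase_of_mem hzmem]
          omega
        exact (ih a z (le_trans (Finset.card_le_card hsub1) herase) haz).trans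
          (ih z b (le_trans (Finset.card_le_card hsub2) herase) hzb)
      · have hempty : ¬ ∃ e'' : V, tmax a < tmin e'' ∧ tmin e'' ≤ tmax e'' ∧ tmax e'' < tmin b := by
          rintro ⟨w, hw1, _, hw3⟩
          exact hz ⟨w, hw1, hw3⟩
        exact Relation.ReflTransGen.single ((hmemR0 (a, b)).2 ⟨(hE _).1 hab, hempty⟩)
  have hR0clos : ∀ a b : V,
      Relation.ReflTransGen (fun x y => (x, y) ∈ R0) a b ↔
      Relation.ReflTransGen (fun x y => (x, y) ∈ E) a b := by
    intro a b
    constructor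
    · exact Relation.ReflTransGen.mono (r := fun x y => (x, y) ∈ R0) (p := fun x y => (x, y) ∈ E) (fun x y hxy => hR0sub hxy) a b
    · intro hab
      rcases hEchar a b hab with rfl | hE'
      · exact Relation.ReflTransGen.refl
      · exact key _ a b le_rfl hE'
  -- every R0-edge is in R
  have hR0R : R0 ⊆ R := by
    intro p hp
    obtain ⟨e, e'⟩ := p
    obtain ⟨h1, h2⟩ := (hmemR0 (e, e')).1 hp
    have hreach : Relation.ReflTransGen (fun x y => (x, y) ∈ R) e e' :=
      (hclos e e').2 (Relation.ReflTransGen.single ((hE _).2 h1))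
    rcases Relation.ReflTransGen.cases_head hreach with rfl | ⟨c, hec, hce'⟩
    · exact absurd (lt_of_lt_of_le h1 (h e)) (lt_irrefl _)
    · have hcE : tmax e < tmin c := (hE _).1 (hRE hec)
      have hce'E : Relation.ReflTransGen (fun x y => (x, y) ∈ E) c e' :=
        (hclos c e').1 hce'
      rcases hEchar c e' hce'E with rfl | hcE'
      · exact hec
      · exact absurd ⟨c, hcE, h c, (hE _).1 hcE'⟩ h2
  have hcard : R.card ≤ R0.card := hmin R0 hR0sub hR0clos
  have hRR0 : R0 = R := Finset.eq_of_subset_of_card_le hR0R hcard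
  intro e e'
  rw [← hRR0]
  exact hmemR0 (e, e')
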